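/- For an integer N ≥ 2 and nonnegative integers (c_1, ..., c_{N−1}), define the Casimir number Cas_N(c_1, ..., c_{N−1}) = (1/N)·Σ_{i=1}^{N−1} (N−i)·i·c_i² + (2/N)·Σ_{1 ≤ i < j ≤ N−1} (N−j)·i·c_i·c_j + Σ_{i=1}^{N−1} (N−i)·i·c_i (a rational number). Let r ≥ 1, m ≥ 1, and let (c_1, ..., c_r) be nonnegative integers. Define the vertically scaled coefficient vector (C_1, ..., C_{m(r+1)−1}) for sl_{m(r+1)} by C_{mj} = m·c_j for 1 ≤ j ≤ r and C_i = 0 whenever i is not a multiple of m. Then Cas_{m(r+1)}(C_1, ..., C_{m(r+1)−1}) = m³ · Cas_{r+1}(c_1, ..., c_r). -/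

import Mathlib

/-- The Casimir number of the weight `∑ i, c i • ω i` for `sl_N`. -/
def Cas (N : ℕ) (c : ℕ → ℕ) : ℚ :=
  (1 / (N : ℚ)) * ∑ i ∈ Finset.Icc 1 (N - 1),
      ((N : ℚ) - (i : ℚ)) * (i : ℚ) * (c i : ℚ) ^ 2
  + (2 / (N : ℚ)) * ∑ i ∈ Finset.Icc 1 (N - 1), ∑ j ∈ Finset.Icc (i + 1) (N - 1),
      ((N : ℚ) - (j : ℚ)) * (i : ℚ) * (c i : ℚ) * (c j : ℚ)
  + ∑ i ∈ Finset.Icc 1 (N - 1), ((N : ℚ) - (i : ℚ)) * (i : ℚ) * (c i : ℚ)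

lemma key {m : ℕ} (hm : 1 ≤ m) (a b : ℕ) (F : ℕ → ℚ)
    (hF : ∀ i, ¬ m ∣ i → F i = 0) :
    ∑ i ∈ Finset.Icc (m * a + 1) (m * (b + 1) - 1), F i
      = ∑ k ∈ Finset.Icc (a + 1) b, F (m * k) := by
  have hm0 : 0 < m := hm
  have himg := Finset.sum_image (s := Finset.Icc (a + 1) b) (f := F)
      (g := fun k => m * k)
      (by intro x hx y hy h; exact Nat.eq_of_mul_eq_mul_left hm0 h)
  rw [← himg]
  symm
  apply Finset.sum_subset
  · intro i hi
    simp only [Finset.mem_image, Finset.mem_Icc] at hi ⊢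
    obtain ⟨k, ⟨hk1, hk2⟩, rfl⟩ := hi
    have h1 : m * (a + 1) ≤ m * k := Nat.mul_le_mul_left m hk1
    have h2 : m * k ≤ m * b := Nat.mul_le_mul_left m hk2
    have h3 : m * (a + 1) = m * a + m := by ring
    have h4 : m * (b + 1) = m * b + m := by ring
    omega
  · intro i hi hni
    by_cases h : m ∣ i
    · obtain ⟨k, rfl⟩ := h
      exfalso
      apply hni
      simp only [Finset.mem_image, Finset.mem_Icc] at hi ⊢
      refine ⟨k, ⟨?_, ?_⟩, rfl⟩
      · by_contra hc
        push_neg at hc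
        have : m * k ≤ m * a := Nat.mul_le_mul_left m (by omega)
        omega
      · by_contra hc
        push_neg at hc
        have : m * (b + 1) ≤ m * k := Nat.mul_le_mul_left m hc
        omega
    · exact hF i h

lemma key0 {m : ℕ} (hm : 1 ≤ m) (b : ℕ) (F : ℕ → ℚ)
    (hF : ∀ i, ¬ m ∣ i → F i = 0) :
    ∑ i ∈ Finset.Icc 1 (m * (b + 1) - 1), F i
      = ∑ k ∈ Finset.Icc 1 b, F (m * k) := by
  have := key hm 0 b F hF
  simpa using this

theorem stmt13 (r m : ℕ) (hr : 1 ≤ r) (hm : 1 ≤ m) (c : ℕ → ℕ) :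
    Cas (m * (r + 1)) (fun i => if m ∣ i then m * c (i / m) else 0) =
      (m : ℚ) ^ 3 * Cas (r + 1) c := by
  have hm0 : 0 < m := hm
  have hCm : ∀ k : ℕ,
      (((if m ∣ m * k then m * c ((m * k) / m) else 0) : ℕ) : ℚ) = m * c k := by
    intro k
    simp [Nat.mul_div_cancel_left _ hm0]
  have hCz : ∀ i : ℕ, ¬ m ∣ i →
      (((if m ∣ i then m * c (i / m) else 0) : ℕ) : ℚ) = 0 := by
    intro i h; simp [h]
  unfold Cas
  simp only [Nat.add_sub_cancel]
  rw [key0 hm r _ (by intro i h; simp [hCz i h])]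
  rw [key0 hm r _ (fun i h =>
      Finset.sum_eq_zero (fun j hj => by simp [hCz i h]))]
  rw [key0 hm r _ (by intro i h; simp [hCz i h])]
  rw [Finset.sum_congr rfl (fun k hk =>
      key hm k r _ (fun j h => by simp [hCz j h]))]
  simp only [hCm]
  have hr0 : ((r : ℚ) + 1) ≠ 0 := by positivity
  have hm0' : (m : ℚ) ≠ 0 := Nat.cast_ne_zero.mpr (by omega)
  simp only [Finset.mul_sum, mul_add]
  congr 1
  · congr 1
    · exact Finset.sum_congr rfl fun k hk => by
        push_cast; field_simp
    · refine Finset.sum_congr rfl fun k hk => ?_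
      exact Finset.sum_congr rfl fun l hl => by
        push_cast; field_simp
  · exact Finset.sum_congr rfl fun k hk => by
      push_cast; ring
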